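/- Assume the family {f_t}_t is Newton-admissible and the point (τ,q) is sufficiently close to the origin, and let ω₁,…,ω_{k_{L'}} be the leading linear forms produced by the renumbering and polynomials c_{k,l}(s) with df^k(ρ(s)) + Σ_{l<k} c_{k,l}(s) df^l(ρ(s)) = ω_k s^{ν_k} + (higher-order terms), ω_k ≠ 0, ν₁ ≤ ⋯ ≤ ν_{k_{L'}} ≤ d − w_min. Let ρ'(s) be a second real analytic path as in the context, ℓ(s) := ρ(s) − ρ'(s), o_ℓ its order in s, and ℓ_∞ := lim_{s→0⁺} ℓ(s)/|s|^{o_ℓ}. Then ω_k(ℓ_∞) = 0 for every 1 ≤ k ≤ k_{L'}. -/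

import Mathlib

open MvPolynomial Filter Topology Set

noncomputable section

namespace NewtonPaper

/-- A point of a finite-dimensional Euclidean space viewed as a plain function. -/
def pt {m : ℕ} (p : EuclideanSpace ℂ (Fin m)) : Fin m → ℂ := p

/-- `d(w;g)`: the minimal value of `∑ i, w i * α i` over the support of `g`. -/
def dmin {n : ℕ} (w : Fin n → ℕ) (g : MvPolynomial (Fin n) ℂ) : ℕ :=
  sInf {m : ℕ | ∃ α ∈ g.support, (∑ i, w i * α i) = m}

/-- The face function `g_w` of `g` with respect to the weight vector `w`. -/
def facePoly {n : ℕ} (w : Fin n → ℕ) (g : MvPolynomial (Fin n) ℂ) : MvPolynomial (Fin n) ℂ :=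
  ∑ α ∈ g.support.filter (fun α => (∑ i, w i * α i) = dmin w g), monomial α (coeff α g)

/-- The Newton polyhedron `Γ₊(g)`. -/
def NewtonPolyhedron {n : ℕ} (g : MvPolynomial (Fin n) ℂ) : Set (Fin n → ℝ) :=
  convexHull ℝ (⋃ α ∈ g.support, {x : Fin n → ℝ | ∀ i, (α i : ℝ) ≤ x i})

/-- The Newton boundary `Γ(g)`: the union of the compact faces of `Γ₊(g)`, i.e. of the
faces of `Γ₊(g)` supported by strictly positive linear functionals. -/
def NewtonBoundary {n : ℕ} (g : MvPolynomial (Fin n) ℂ) : Set (Fin n → ℝ) :=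
  ⋃ w ∈ {w : Fin n → ℝ | ∀ i, 0 < w i},
    {x ∈ NewtonPolyhedron g |
      ∀ y ∈ NewtonPolyhedron g, (∑ i, w i * x i) ≤ ∑ i, w i * y i}

/-- `g` vanishes identically on the coordinate subspace `ℂ^I`. -/
def VanishesOn {n : ℕ} (g : MvPolynomial (Fin n) ℂ) (I : Set (Fin n)) : Prop :=
  ∀ z : Fin n → ℂ, (∀ i, i ∉ I → z i = 0) → eval z g = 0

/-- `g 0, …, g (p-1)` define a (Newton) non-degenerate complete intersection germ at `0`. -/
def IsNondegCI {n p : ℕ} (g : Fin p → MvPolynomial (Fin n) ℂ) : Prop :=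
  ∀ w : Fin n → ℕ, (∀ i, 0 < w i) →
    ∀ z : Fin n → ℂ, (∀ i, z i ≠ 0) → (∀ j, eval z (facePoly w (g j)) = 0) →
      LinearIndependent ℂ fun j => fun i => eval z (pderiv i (facePoly w (g j)))

/-- `R` is a radius of local tameness of the set of functions `{g 0, …, g (p-1)}`. -/
def IsTameRadius {n p : ℕ} (R : ℝ) (g : Fin p → MvPolynomial (Fin n) ℂ) : Prop :=
  ∀ I : Finset (Fin n), I.Nonempty → (∀ j, VanishesOn (g j) ↑I) →
    ∀ w : Fin n → ℕ, w ≠ 0 → (∀ i, w i = 0 ↔ i ∈ I) →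
      ∀ z : Fin n → ℂ, (∀ i, z i ≠ 0) → (∑ i ∈ I, ‖z i‖ ^ 2) < R →
        (∀ j, eval z (facePoly w (g j)) = 0) →
        LinearIndependent ℂ fun j => fun i : {i : Fin n // i ∉ I} =>
          eval z (pderiv i.1 (facePoly w (g j)))

/-- The specialisation `f_t` of a polynomial `P` on `ℂ × ℂⁿ` (variable `0` is `t`). -/
def specialize {n : ℕ} (t : ℂ) (P : MvPolynomial (Fin (n + 1)) ℂ) : MvPolynomial (Fin n) ℂ :=
  aeval (Fin.cases (C t) fun i => X i) P

/-- The family `{f_t}`, where `f = (F 0) ⋯ (F (k₀-1))`, is Newton-admissible. -/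
def NewtonAdmissible {n k₀ : ℕ} (F : Fin k₀ → MvPolynomial (Fin (n + 1)) ℂ) : Prop :=
  ∃ R > (0 : ℝ), ∃ τ > (0 : ℝ), ∀ t : ℂ, ‖t‖ < τ →
    (∀ k, NewtonBoundary (specialize t (F k)) = NewtonBoundary (specialize 0 (F k))) ∧
    ∀ (p : ℕ) (κ : Fin p → Fin k₀), Function.Injective κ →
      IsNondegCI (fun j => specialize t (F (κ j))) ∧
      ∃ R' > R, IsTameRadius R' fun j => specialize t (F (κ j))

/-- The stratum `S^I(K)` of the canonical toric stratification of `V(f) ⊆ ℂ × ℂⁿ`. -/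
def stratum {n k₀ : ℕ} (F : Fin k₀ → MvPolynomial (Fin (n + 1)) ℂ)
    (I : Set (Fin n)) (K : Set (Fin k₀)) : Set (EuclideanSpace ℂ (Fin (n + 1))) :=
  {p | (∀ i : Fin n, pt p i.succ ≠ 0 ↔ i ∈ I) ∧ ∀ k, eval (pt p) (F k) = 0 ↔ k ∈ K}

/-- The slice `S^I_t(K)` of `S^I(K)`, viewed in `ℂⁿ`. -/
def stratumT {n k₀ : ℕ} (F : Fin k₀ → MvPolynomial (Fin (n + 1)) ℂ) (t : ℂ)
    (I : Set (Fin n)) (K : Set (Fin k₀)) : Set (EuclideanSpace ℂ (Fin n)) :=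
  {z | (∀ i : Fin n, pt z i ≠ 0 ↔ i ∈ I) ∧ ∀ k, eval (pt z) (specialize t (F k)) = 0 ↔ k ∈ K}

/-- Orthogonal projection onto a subspace, as an endomorphism. -/
def projOf {m : ℕ} (T : Submodule ℂ (EuclideanSpace ℂ (Fin m))) :
    EuclideanSpace ℂ (Fin m) →L[ℂ] EuclideanSpace ℂ (Fin m) :=
  T.subtypeL.comp (T.orthogonalProjection)

/-- Tangent space of a set at a point (the ℂ-span of the tangent cone; for a
non-singular complex submanifold this is the usual tangent space). -/
def tangentSpaceAt {m : ℕ} (S : Set (EuclideanSpace ℂ (Fin m)))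
    (p : EuclideanSpace ℂ (Fin m)) : Submodule ℂ (EuclideanSpace ℂ (Fin m)) :=
  Submodule.span ℂ (tangentConeAt ℂ S p)

/-- Convergence of subspaces in the sense of convergence of orthogonal projections. -/
def TendstoSubspaces {α : Type*} {m : ℕ} (l : Filter α)
    (T : α → Submodule ℂ (EuclideanSpace ℂ (Fin m)))
    (T' : Submodule ℂ (EuclideanSpace ℂ (Fin m))) : Prop :=
  Tendsto (fun x => projOf (T x)) l (𝓝 (projOf T'))

/-- Whitney's condition (b) for the pair `(S', S)`. -/
def WhitneyB {m : ℕ} (S' S : Set (EuclideanSpace ℂ (Fin m))) : Prop :=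
  ∀ q ∈ S' ∩ closure S, ∀ pm qm : ℕ → EuclideanSpace ℂ (Fin m),
    ∀ T : Submodule ℂ (EuclideanSpace ℂ (Fin m)), ∀ u : EuclideanSpace ℂ (Fin m),
      (∀ j, pm j ∈ S) → (∀ j, qm j ∈ S') → (∀ j, pm j ≠ qm j) →
      Tendsto pm atTop (𝓝 q) → Tendsto qm atTop (𝓝 q) →
      TendstoSubspaces atTop (fun j => tangentSpaceAt S (pm j)) T →
      Tendsto (fun j => (‖pm j - qm j‖ : ℝ)⁻¹ • (pm j - qm j)) atTop (𝓝 u) →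
      u ∈ T

/-- `S` is, near `p ∈ S`, a non-singular (complex) locally closed submanifold. -/
def IsNonsingularAt {m : ℕ} (S : Set (EuclideanSpace ℂ (Fin m)))
    (p : EuclideanSpace ℂ (Fin m)) : Prop :=
  ∃ (k : ℕ) (U : Set (EuclideanSpace ℂ (Fin m)))
    (g : EuclideanSpace ℂ (Fin m) → EuclideanSpace ℂ (Fin k)),
    IsOpen U ∧ p ∈ U ∧ Differentiable ℂ g ∧ S ∩ U = {x ∈ U | g x = 0} ∧
      Function.Surjective (fderiv ℂ g p)

/-- Whitney (b)-regular stratification of `V`. -/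
def IsWhitneyStratification {m : ℕ} (V : Set (EuclideanSpace ℂ (Fin m)))
    (𝒮 : Set (Set (EuclideanSpace ℂ (Fin m)))) : Prop :=
  ⋃₀ 𝒮 = V ∧
  (∀ S ∈ 𝒮, ∀ S' ∈ 𝒮, S ≠ S' → Disjoint S S') ∧
  (∀ S ∈ 𝒮, ∀ p ∈ S, IsNonsingularAt S p) ∧
  (∀ S ∈ 𝒮, ∀ S' ∈ 𝒮, S ≠ S' → WhitneyB S' S)

/-- The coefficient vector of the complex differential of `P` at `p`. -/
def dvec {m : ℕ} (P : MvPolynomial (Fin m) ℂ) (p : EuclideanSpace ℂ (Fin m)) :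
    Fin m → ℂ := fun j => eval (pt p) (pderiv j P)

/-- The kernel of the complex differential of `P` at `p`. -/
def dKer {m : ℕ} (P : MvPolynomial (Fin m) ℂ) (p : EuclideanSpace ℂ (Fin m)) :
    Submodule ℂ (EuclideanSpace ℂ (Fin m)) :=
  LinearMap.ker (ContinuousLinearMap.toLinearMap
    (∑ j, dvec P p j • (EuclideanSpace.proj j : EuclideanSpace ℂ (Fin m) →L[ℂ] ℂ)))

/-- The subspace `ℂ × ℂ^I ⊆ ℂ × ℂⁿ`, where `I = {i | (i : ℕ) < nI}`. -/
def axisCI (n nI : ℕ) : Submodule ℂ (EuclideanSpace ℂ (Fin (n + 1))) :=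
  ⨅ i ∈ {i : Fin n | nI ≤ (i : ℕ)},
    LinearMap.ker (ContinuousLinearMap.toLinearMap
      (EuclideanSpace.proj i.succ : EuclideanSpace ℂ (Fin (n + 1)) →L[ℂ] ℂ))

/-- Thom's `a_f` condition for a stratification `𝒮`, with `V(f) = {f = 0}`. -/
def ThomAf {m : ℕ} (P : MvPolynomial (Fin m) ℂ)
    (𝒮 : Set (Set (EuclideanSpace ℂ (Fin m)))) : Prop :=
  ∀ S ∈ 𝒮, ∀ q ∈ S, ∀ pm : ℕ → EuclideanSpace ℂ (Fin m),
    ∀ T : Submodule ℂ (EuclideanSpace ℂ (Fin m)),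
      (∀ j, eval (pt (pm j)) P ≠ 0) → (∀ j, dvec P (pm j) ≠ 0) →
      Tendsto pm atTop (𝓝 q) →
      TendstoSubspaces atTop (fun j => dKer P (pm j)) T →
      tangentSpaceAt S q ≤ T

/-- Inclusion `Fin m → Fin k₀` given `m ≤ k₀`. -/
def castIdx {k₀ m : ℕ} (h : m ≤ k₀) (k : Fin m) : Fin k₀ :=
  ⟨k, lt_of_lt_of_le k.isLt h⟩



/-! ### Auxiliary lemmas -/

section Helpers

variable {n : ℕ}

lemma mem_newtonPolyhedron_of_mem_support {g : MvPolynomial (Fin n) ℂ} {α : Fin n →₀ ℕ}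
    (hα : α ∈ g.support) : (fun i => (α i : ℝ)) ∈ NewtonPolyhedron g := by
  apply subset_convexHull
  exact Set.mem_biUnion hα fun i => le_refl _

lemma newtonPolyhedron_lb {g : MvPolynomial (Fin n) ℂ} {u : Fin n → ℝ} (hu : ∀ i, 0 ≤ u i)
    {c : ℝ} (hc : ∀ α ∈ g.support, c ≤ ∑ i, u i * (α i : ℝ)) :
    ∀ x ∈ NewtonPolyhedron g, c ≤ ∑ i, u i * x i := by
  have hlin : IsLinearMap ℝ (fun x : Fin n → ℝ => ∑ i, u i * x i) := by
    constructor
    · intro x y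
      simp only [Pi.add_apply, mul_add]
      exact Finset.sum_add_distrib
    · intro a x
      simp only [Pi.smul_apply, smul_eq_mul, Finset.mul_sum]
      exact Finset.sum_congr rfl fun i _ => by ring
  have hsub : (⋃ α ∈ g.support, {x : Fin n → ℝ | ∀ i, (α i : ℝ) ≤ x i})
      ⊆ {x : Fin n → ℝ | c ≤ ∑ i, u i * x i} := by
    intro x hx
    simp only [Set.mem_iUnion, Set.mem_setOf_eq] at hx ⊢
    obtain ⟨α, hα, hxα⟩ := hx
    refine le_trans (hc α hα) (Finset.sum_le_sum fun i _ => ?_)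
    exact mul_le_mul_of_nonneg_left (hxα i) (hu i)
  intro x hx
  exact convexHull_min hsub (convex_halfSpace_ge hlin c) hx

lemma argmin_mem_newtonBoundary {g : MvPolynomial (Fin n) ℂ} {u : Fin n → ℝ} (hu : ∀ i, 0 < u i)
    {α : Fin n →₀ ℕ} (hα : α ∈ g.support)
    (hmin : ∀ β ∈ g.support, (∑ i, u i * (α i : ℝ)) ≤ ∑ i, u i * (β i : ℝ)) :
    (fun i => (α i : ℝ)) ∈ NewtonBoundary g := by
  have hpoly := mem_newtonPolyhedron_of_mem_support hα
  refine Set.mem_biUnion (show u ∈ {w : Fin n → ℝ | ∀ i, 0 < w i} from hu) ?_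
  refine ⟨hpoly, fun y hy => ?_⟩
  exact newtonPolyhedron_lb (fun i => (hu i).le) hmin y hy

lemma newtonBoundary_zero : NewtonBoundary (0 : MvPolynomial (Fin n) ℂ) = ∅ := by
  have hpoly : NewtonPolyhedron (0 : MvPolynomial (Fin n) ℂ) = ∅ := by
    simp [NewtonPolyhedron, MvPolynomial.support_zero]
  ext x
  simp only [NewtonBoundary, Set.mem_iUnion, Set.mem_setOf_eq, Set.mem_empty_iff_false,
    iff_false, not_exists]
  rintro w hw ⟨hx, -⟩
  rw [hpoly] at hx
  exact hx

lemma newtonBoundary_nonempty {g : MvPolynomial (Fin n) ℂ} (hg : g ≠ 0) :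
    (NewtonBoundary g).Nonempty := by
  obtain ⟨α, hα, hmin⟩ := Finset.exists_min_image g.support
    (fun α => ∑ i, (1 : ℝ) * (α i : ℝ)) (MvPolynomial.support_nonempty.mpr hg)
  exact ⟨_, argmin_mem_newtonBoundary (fun i => one_pos) hα hmin⟩

lemma dmin_le {g : MvPolynomial (Fin n) ℂ} {w : Fin n → ℕ} {α : Fin n →₀ ℕ}
    (hα : α ∈ g.support) : dmin w g ≤ ∑ i, w i * α i :=
  Nat.sInf_le ⟨α, hα, rfl⟩

lemma exists_dmin {g : MvPolynomial (Fin n) ℂ} (hg : g ≠ 0) (w : Fin n → ℕ) :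
    ∃ α ∈ g.support, (∑ i, w i * α i) = dmin w g := by
  obtain ⟨α, hα⟩ := MvPolynomial.support_nonempty.mpr hg
  have hne : {m : ℕ | ∃ α ∈ g.support, (∑ i, w i * α i) = m}.Nonempty :=
    ⟨∑ i, w i * α i, ⟨α, hα, rfl⟩⟩
  exact Nat.sInf_mem hne

lemma dmin_eq_of_newtonBoundary_eq {g h : MvPolynomial (Fin n) ℂ} (hg : g ≠ 0) (hh : h ≠ 0)
    (hNB : NewtonBoundary g = NewtonBoundary h) (w : Fin n → ℕ) : dmin w g = dmin w h := by
  have key : ∀ g h : MvPolynomial (Fin n) ℂ, g ≠ 0 → h ≠ 0 →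
      NewtonBoundary g = NewtonBoundary h → dmin w g ≤ dmin w h := by
    intro g h hg hh hNB
    obtain ⟨α₀, hα₀, hα₀d⟩ := exists_dmin hh w
    set C : ℝ := ∑ i, (α₀ i : ℝ) with hC_def
    have hC : (0 : ℝ) ≤ C := Finset.sum_nonneg fun i _ => Nat.cast_nonneg _
    have hmain : ∀ δ : ℝ, 0 < δ → (dmin w g : ℝ) ≤ (dmin w h : ℝ) + δ * C := by
      intro δ hδ
      set u : Fin n → ℝ := fun i => (w i : ℝ) + δ with hu_def
      have hu : ∀ i, 0 < u i := fun i => add_pos_of_nonneg_of_pos (Nat.cast_nonneg _) hδ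
      obtain ⟨αg, hαg, hαgmin⟩ := Finset.exists_min_image g.support
        (fun α => ∑ i, u i * (α i : ℝ)) (MvPolynomial.support_nonempty.mpr hg)
      obtain ⟨αh, hαh, hαhmin⟩ := Finset.exists_min_image h.support
        (fun α => ∑ i, u i * (α i : ℝ)) (MvPolynomial.support_nonempty.mpr hh)
      have h1 : (∑ i, u i * (αg i : ℝ)) ≤ ∑ i, u i * (αh i : ℝ) := by
        have hmem : (fun i => (αh i : ℝ)) ∈ NewtonBoundary g := by
          rw [hNB]
          exact argmin_mem_newtonBoundary hu hαh hαhmin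
        have hpoly : (fun i => (αh i : ℝ)) ∈ NewtonPolyhedron g := by
          simp only [NewtonBoundary, Set.mem_iUnion, Set.mem_setOf_eq] at hmem
          obtain ⟨w', -, hw', -⟩ := hmem
          exact hw'
        exact newtonPolyhedron_lb (fun i => (hu i).le) (fun β hβ => hαgmin β hβ) _ hpoly
      have h2 : (dmin w g : ℝ) ≤ ∑ i, u i * (αg i : ℝ) := by
        have := dmin_le (g := g) (w := w) hαg
        have hcast : (dmin w g : ℝ) ≤ ∑ i, (w i : ℝ) * (αg i : ℝ) := by
          exact_mod_cast le_trans this (le_of_eq (by push_cast; ring))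
        refine le_trans hcast (Finset.sum_le_sum fun i _ => ?_)
        exact mul_le_mul_of_nonneg_right (by simp [hu_def, hδ.le]) (Nat.cast_nonneg _)
      have h3 : (∑ i, u i * (αh i : ℝ)) ≤ ∑ i, u i * (α₀ i : ℝ) := hαhmin α₀ hα₀
      have h4 : (∑ i, u i * (α₀ i : ℝ)) = (dmin w h : ℝ) + δ * C := by
        have : (∑ i, u i * (α₀ i : ℝ))
            = (∑ i, (w i : ℝ) * (α₀ i : ℝ)) + δ * ∑ i, (α₀ i : ℝ) := by
          simp only [hu_def, add_mul, Finset.mul_sum]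
          rw [Finset.sum_add_distrib]
        rw [this, hC_def]
        congr 1
        rw [← hα₀d]
        push_cast
        ring
      linarith
    by_contra hlt
    push_neg at hlt
    have hlt' : dmin w h < dmin w g := hlt
    have hδpos : (0 : ℝ) < 1 / (C + 1) := by positivity
    have := hmain _ hδpos
    have hCC : 1 / (C + 1) * C < 1 := by
      rw [div_mul_eq_mul_div, div_lt_one (by linarith)]
      linarith
    have hnat : (dmin w h : ℝ) + 1 ≤ (dmin w g : ℝ) := by exact_mod_cast hlt'
    linarith
  exact le_antisymm (key g h hg hh hNB) (key h g hh hg hNB.symm)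

lemma specialize_eq (t : ℂ) (P : MvPolynomial (Fin (n + 1)) ℂ) :
    specialize t P = Polynomial.eval (C t) (finSuccEquiv ℂ n P) := by
  induction P using MvPolynomial.induction_on with
  | C a =>
      simp [specialize, MvPolynomial.finSuccEquiv_apply]
  | add p q hp hq =>
      simp only [specialize] at hp hq ⊢
      rw [map_add, map_add, Polynomial.eval_add, hp, hq]
  | mul_X p j ih =>
      simp only [specialize] at ih ⊢
      rw [map_mul, map_mul, Polynomial.eval_mul, ← ih]
      congr 1
      refine Fin.cases ?_ (fun i => ?_) j
      · rw [MvPolynomial.finSuccEquiv_X_zero, Polynomial.eval_X]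
        simp
      · rw [MvPolynomial.finSuccEquiv_X_succ, Polynomial.eval_C]
        simp

lemma coeff_specialize (t : ℂ) (P : MvPolynomial (Fin (n + 1)) ℂ) (α : Fin n →₀ ℕ) :
    coeff α (specialize t P) =
      Polynomial.eval t (∑ m ∈ (finSuccEquiv ℂ n P).support,
        Polynomial.monomial m (coeff (Finsupp.cons m α) P)) := by
  rw [specialize_eq, Polynomial.eval_eq_sum, Polynomial.sum_def, Polynomial.eval_finset_sum]
  rw [MvPolynomial.coeff_sum]
  refine Finset.sum_congr rfl fun m hm => ?_
  rw [Polynomial.eval_monomial, ← MvPolynomial.finSuccEquiv_coeff_coeff]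
  rw [mul_comm ((finSuccEquiv ℂ n P).coeff m) ((C t) ^ m), ← map_pow,
    MvPolynomial.coeff_C_mul]
  ring

lemma exists_good_t {P : MvPolynomial (Fin (n + 1)) ℂ} {γ : Fin (n + 1) →₀ ℕ}
    (hγ : γ ∈ P.support) {τ₀ : ℝ} (hτ₀ : 0 < τ₀) :
    ∃ t : ℂ, ‖t‖ < τ₀ ∧ Finsupp.tail γ ∈ (specialize t P).support := by
  classical
  set α := Finsupp.tail γ with hα_def
  set q : Polynomial ℂ := ∑ m ∈ (finSuccEquiv ℂ n P).support,
    Polynomial.monomial m (coeff (Finsupp.cons m α) P) with hq_def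
  have hγP : coeff γ P ≠ 0 := MvPolynomial.mem_support_iff.mp hγ
  have hcc : coeff α ((finSuccEquiv ℂ n P).coeff (γ 0)) = coeff γ P := by
    rw [MvPolynomial.finSuccEquiv_coeff_coeff, hα_def, Finsupp.cons_tail]
  have hγ0mem : γ 0 ∈ (finSuccEquiv ℂ n P).support := by
    rw [Polynomial.mem_support_iff]
    intro h0
    rw [h0] at hcc
    simp at hcc
    exact hγP hcc.symm
  have hqc : q.coeff (γ 0) = coeff γ P := by
    rw [hq_def, Polynomial.finset_sum_coeff]
    rw [Finset.sum_eq_single_of_mem (γ 0) hγ0mem (fun m hm hne => by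
      rw [Polynomial.coeff_monomial, if_neg hne])]
    rw [Polynomial.coeff_monomial, if_pos rfl, hα_def, Finsupp.cons_tail]
  have hq0 : q ≠ 0 := fun h0 => hγP (by rw [← hqc, h0, Polynomial.coeff_zero])
  have hroots : {x : ℂ | q.IsRoot x}.Finite := q.finite_setOf_isRoot hq0
  have hIoo : (Set.Ioo (0 : ℝ) τ₀).Infinite := Set.Ioo_infinite hτ₀
  have hM : ((fun r : ℝ => (r : ℂ)) '' Set.Ioo 0 τ₀).Infinite :=
    hIoo.image (Complex.ofReal_injective.injOn)
  have hns : ¬((fun r : ℝ => (r : ℂ)) '' Set.Ioo 0 τ₀ ⊆ {x : ℂ | q.IsRoot x}) := by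
    intro hsub
    exact hM (hroots.subset hsub)
  obtain ⟨t, htM, htS⟩ := Set.not_subset.mp hns
  obtain ⟨r, hr, rfl⟩ := htM
  refine ⟨r, ?_, ?_⟩
  · rw [Complex.norm_real, Real.norm_eq_abs, abs_of_pos hr.1]
    exact hr.2
  · rw [MvPolynomial.mem_support_iff, coeff_specialize, ← hq_def]
    exact fun h0 => htS h0

lemma weight_ge_of_mem_support {P : MvPolynomial (Fin (n + 1)) ℂ} {γ : Fin (n + 1) →₀ ℕ}
    (hγ : γ ∈ P.support) (wz : Fin n → ℕ) {τ₀ : ℝ}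
    (hNB : ∀ t : ℂ, ‖t‖ < τ₀ → NewtonBoundary (specialize t P) = NewtonBoundary (specialize 0 P))
    {τ : ℂ} (hτ : ‖τ‖ < τ₀) (hτ₀ : 0 < τ₀) {d : ℕ} (hd : dmin wz (specialize τ P) = d)
    (hd1 : 1 ≤ d) : d ≤ ∑ i, wz i * γ i.succ := by
  have hτP : specialize τ P ≠ 0 := by
    intro h0
    rw [h0] at hd
    have : dmin wz (0 : MvPolynomial (Fin n) ℂ) = 0 := by
      simp [dmin, MvPolynomial.support_zero]
    omega
  obtain ⟨t₁, ht₁, hmem⟩ := exists_good_t hγ hτ₀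
  have h1 : specialize t₁ P ≠ 0 := fun h0 => by simp [h0] at hmem
  have hNBττ : NewtonBoundary (specialize 0 P) = NewtonBoundary (specialize τ P) :=
    (hNB τ hτ).symm
  have h0ne : specialize 0 P ≠ 0 := by
    intro h0
    have hne := newtonBoundary_nonempty hτP
    rw [← hNBττ, h0, newtonBoundary_zero] at hne
    exact Set.not_nonempty_empty hne
  have e1 : dmin wz (specialize t₁ P) = dmin wz (specialize 0 P) :=
    dmin_eq_of_newtonBoundary_eq h1 h0ne (hNB t₁ ht₁) wz
  have e2 : dmin wz (specialize 0 P) = dmin wz (specialize τ P) :=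
    dmin_eq_of_newtonBoundary_eq h0ne hτP hNBττ wz
  have hle : d ≤ ∑ i, wz i * (Finsupp.tail γ) i := by
    rw [← hd, ← e2, ← e1]
    exact dmin_le hmem
  calc d ≤ ∑ i, wz i * (Finsupp.tail γ) i := hle
    _ = ∑ i, wz i * γ i.succ := Finset.sum_congr rfl fun i _ => by rw [Finsupp.tail_apply]

lemma mem_support_of_pderiv {N : ℕ} {P : MvPolynomial (Fin N) ℂ} {j : Fin N}
    {β : Fin N →₀ ℕ} (hβ : β ∈ (pderiv j P).support) :
    β + Finsupp.single j 1 ∈ P.support := by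
  classical
  have hrep : pderiv j P
      = ∑ γ ∈ P.support, monomial (γ - Finsupp.single j 1) (coeff γ P * γ j) := by
    conv_lhs => rw [P.as_sum]
    rw [map_sum]
    exact Finset.sum_congr rfl fun γ _ => pderiv_monomial
  rw [hrep] at hβ
  have hb := MvPolynomial.support_sum hβ
  obtain ⟨γ, hγ, hβγ⟩ := Finset.mem_biUnion.mp hb
  rw [MvPolynomial.support_monomial] at hβγ
  by_cases hc : coeff γ P * γ j = 0
  · rw [if_pos hc] at hβγ
    exact absurd hβγ (Finset.notMem_empty β)
  · rw [if_neg hc] at hβγ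
    have hβeq : β = γ - Finsupp.single j 1 := Finset.mem_singleton.mp hβγ
    have hγj : 1 ≤ γ j := by
      rcases Nat.eq_zero_or_pos (γ j) with h0 | h1
      · exact absurd (by simp [h0]) hc
      · exact h1
    have : β + Finsupp.single j 1 = γ := by
      rw [hβeq]
      ext i
      by_cases hij : j = i
      · subst hij
        simp only [Finsupp.add_apply, Finsupp.tsub_apply, Finsupp.single_eq_same]
        omega
      · simp only [Finsupp.add_apply, Finsupp.tsub_apply,
          Finsupp.single_eq_of_ne' hij]
        omega
    rw [this]
    exact hγ

lemma hasDerivAt_eval_comp {N : ℕ} (P : MvPolynomial (Fin N) ℂ) (Z : Fin N → ℝ → ℂ)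
    (Z' : Fin N → ℂ) (s : ℝ) (hZ : ∀ j, HasDerivAt (fun r => Z j r) (Z' j) s) :
    HasDerivAt (fun r => eval (fun j => Z j r) P)
      (∑ j, eval (fun j => Z j s) (pderiv j P) * Z' j) s := by
  classical
  induction P using MvPolynomial.induction_on with
  | C a =>
      have : (∑ j, eval (fun j => Z j s) (pderiv j (C a : MvPolynomial (Fin N) ℂ)) * Z' j)
          = 0 := by
        refine Finset.sum_eq_zero fun j _ => ?_
        rw [pderiv_C]
        simp
      rw [this]
      simpa using hasDerivAt_const s (a : ℂ)
  | add p q hp hq =>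
      have h := hp.add hq
      have he : (fun r => eval (fun j => Z j r) p + eval (fun j => Z j r) q)
          = fun r => eval (fun j => Z j r) (p + q) := by
        funext r
        rw [map_add]
      have hv : (∑ j, eval (fun j => Z j s) (pderiv j (p + q)) * Z' j)
          = (∑ j, eval (fun j => Z j s) (pderiv j p) * Z' j)
            + ∑ j, eval (fun j => Z j s) (pderiv j q) * Z' j := by
        rw [← Finset.sum_add_distrib]
        refine Finset.sum_congr rfl fun j _ => ?_
        rw [map_add, map_add, add_mul]
      rw [hv]
      rw [← he] at *
      exact h
  | mul_X p j ih =>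
      have h := ih.mul (hZ j)
      have he : (fun r => eval (fun i => Z i r) p * Z j r)
          = fun r => eval (fun i => Z i r) (p * X j) := by
        funext r
        rw [map_mul, eval_X]
      have hv : (∑ i, eval (fun i' => Z i' s) (pderiv i (p * X j)) * Z' i)
          = (∑ i, eval (fun i' => Z i' s) (pderiv i p) * Z' i) * Z j s
            + eval (fun i' => Z i' s) p * Z' j := by
        have hterm : ∀ i : Fin N, eval (fun i' => Z i' s) (pderiv i (p * X j)) * Z' i
            = eval (fun i' => Z i' s) (pderiv i p) * Z' i * Z j s
              + (if i = j then eval (fun i' => Z i' s) p * Z' j else 0) := by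
          intro i
          rw [pderiv_mul, map_add, map_mul, map_mul, eval_X]
          by_cases hij : i = j
          · subst hij
            rw [pderiv_X_self, if_pos rfl]
            simp only [map_one, mul_one]
            ring
          · rw [pderiv_X_of_ne (Ne.symm hij), if_neg hij]
            simp only [map_zero, mul_zero, add_zero]
            ring
        rw [Finset.sum_congr rfl fun i _ => hterm i, Finset.sum_add_distrib,
          Finset.sum_ite_eq' Finset.univ j
            (fun _ => eval (fun i' => Z i' s) p * Z' j), if_pos (Finset.mem_univ j),
          ← Finset.sum_mul]
      rw [hv, ← he]
      exact h

lemma analytic_factor {g : ℝ → ℂ} (hg : AnalyticAt ℝ g 0) {m : ℕ} {a : ℂ} (ha : a ≠ 0)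
    (hlim : Tendsto (fun s : ℝ => ((s : ℂ) ^ m)⁻¹ * g s) (𝓝[>] 0) (𝓝 a)) :
    ∃ u : ℝ → ℂ, AnalyticAt ℝ u 0 ∧ u 0 = a ∧ ∀ᶠ s in 𝓝 (0 : ℝ), g s = (s : ℝ) ^ m • u s := by
  have hofReal : Tendsto (fun s : ℝ => (s : ℂ)) (𝓝[>] 0) (𝓝 0) := by
    have := Complex.continuous_ofReal.continuousAt (x := (0 : ℝ))
    simpa using this.tendsto.mono_left nhdsWithin_le_nhds
  have htend0 : ∀ k : ℕ, 1 ≤ k → Tendsto (fun s : ℝ => (s : ℂ) ^ k) (𝓝[>] 0) (𝓝 0) := by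
    intro k hk
    have := hofReal.pow k
    simpa [zero_pow (by omega : k ≠ 0)] using this
  by_cases h0 : ∀ᶠ z in 𝓝 (0 : ℝ), g z = 0
  · exfalso
    have hz : ∀ᶠ s : ℝ in 𝓝[>] (0 : ℝ), (0 : ℂ) = ((s : ℂ) ^ m)⁻¹ * g s := by
      filter_upwards [h0.filter_mono nhdsWithin_le_nhds] with s hs
      rw [hs, mul_zero]
    have hT : Tendsto (fun s : ℝ => ((s : ℂ) ^ m)⁻¹ * g s) (𝓝[>] 0) (𝓝 0) :=
      Tendsto.congr' hz tendsto_const_nhds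
    exact ha (tendsto_nhds_unique hlim hT)
  · obtain ⟨nn, u, hu, hu0, heq⟩ := hg.exists_eventuallyEq_pow_smul_nonzero_iff.mpr h0
    have heq' : ∀ᶠ z in 𝓝 (0 : ℝ), g z = z ^ nn • u z := by
      filter_upwards [heq] with z hz
      simpa using hz
    have hucont : Tendsto u (𝓝[>] (0 : ℝ)) (𝓝 (u 0)) :=
      hu.continuousAt.tendsto.mono_left nhdsWithin_le_nhds
    rcases lt_trichotomy nn m with hlt | heqm | hgt
    · exfalso
      set p := m - nn with hp_def
      have hp1 : 1 ≤ p := by omega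
      have hev : ∀ᶠ s : ℝ in 𝓝[>] (0 : ℝ),
          (s : ℂ) ^ p * (((s : ℂ) ^ m)⁻¹ * g s) = u s := by
        filter_upwards [heq'.filter_mono nhdsWithin_le_nhds, self_mem_nhdsWithin]
          with s hs hs0
        have hsne : (s : ℂ) ≠ 0 := Complex.ofReal_ne_zero.mpr (ne_of_gt hs0)
        rw [hs, Complex.real_smul, Complex.ofReal_pow]
        rw [show (s : ℂ) ^ p * (((s : ℂ) ^ m)⁻¹ * ((s : ℂ) ^ nn * u s))
            = ((s : ℂ) ^ p * (s : ℂ) ^ nn) * (((s : ℂ) ^ m)⁻¹ * u s) from by ring,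
          ← pow_add, hp_def, Nat.sub_add_cancel hlt.le, ← mul_assoc,
          mul_inv_cancel₀ (pow_ne_zero _ hsne), one_mul]
      have hT : Tendsto (fun s : ℝ => (s : ℂ) ^ p * (((s : ℂ) ^ m)⁻¹ * g s)) (𝓝[>] 0)
          (𝓝 (0 * a)) := (htend0 p hp1).mul hlim
      rw [zero_mul] at hT
      have := tendsto_nhds_unique (hT.congr' hev) hucont
      exact hu0 this.symm
    · subst heqm
      refine ⟨u, hu, ?_, heq'⟩
      have hev : ∀ᶠ s : ℝ in 𝓝[>] (0 : ℝ), ((s : ℂ) ^ nn)⁻¹ * g s = u s := by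
        filter_upwards [heq'.filter_mono nhdsWithin_le_nhds, self_mem_nhdsWithin]
          with s hs hs0
        have hsne : (s : ℂ) ≠ 0 := Complex.ofReal_ne_zero.mpr (ne_of_gt hs0)
        rw [hs, Complex.real_smul, Complex.ofReal_pow, ← mul_assoc,
          inv_mul_cancel₀ (pow_ne_zero _ hsne), one_mul]
      exact (tendsto_nhds_unique (hlim.congr' hev) hucont).symm
    · exfalso
      set k := nn - m with hk_def
      have hk1 : 1 ≤ k := by omega
      have hknn : nn = m + k := by omega
      have hev : ∀ᶠ s : ℝ in 𝓝[>] (0 : ℝ),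
          ((s : ℂ) ^ m)⁻¹ * g s = (s : ℂ) ^ k * u s := by
        filter_upwards [heq'.filter_mono nhdsWithin_le_nhds, self_mem_nhdsWithin]
          with s hs hs0
        have hsne : (s : ℂ) ≠ 0 := Complex.ofReal_ne_zero.mpr (ne_of_gt hs0)
        rw [hs, Complex.real_smul, Complex.ofReal_pow, hknn, pow_add,
          show ((s : ℂ) ^ m)⁻¹ * ((s : ℂ) ^ m * (s : ℂ) ^ k * u s)
            = (((s : ℂ) ^ m)⁻¹ * (s : ℂ) ^ m) * ((s : ℂ) ^ k * u s) from by ring,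
          inv_mul_cancel₀ (pow_ne_zero _ hsne), one_mul]
      have hT : Tendsto (fun s : ℝ => (s : ℂ) ^ k * u s) (𝓝[>] 0) (𝓝 (0 * u 0)) :=
        (htend0 k hk1).mul hucont
      rw [zero_mul] at hT
      exact ha (tendsto_nhds_unique hlim (hT.congr' (hev.mono fun s h => h.symm)))

lemma deriv_factor {g u : ℝ → ℂ} (hu : AnalyticAt ℝ u 0) {m : ℕ}
    (heq : ∀ᶠ s in 𝓝 (0 : ℝ), g s = (s : ℝ) ^ m • u s) :
    ∀ᶠ s in 𝓝 (0 : ℝ),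
      deriv g s = ((m : ℝ) * s ^ (m - 1)) • u s + (s : ℝ) ^ m • deriv u s := by
  have hud : ∀ᶠ y in 𝓝 (0 : ℝ), AnalyticAt ℝ u y := hu.eventually_analyticAt
  have heq2 : deriv g =ᶠ[𝓝 (0 : ℝ)] deriv fun s => (s : ℝ) ^ m • u s :=
    Filter.EventuallyEq.deriv heq
  filter_upwards [heq2, hud] with y hy hya
  rw [hy]
  have hp : HasDerivAt (fun s : ℝ => s ^ m) ((m : ℝ) * y ^ (m - 1)) y := hasDerivAt_pow m y
  have hu' : HasDerivAt u (deriv u y) y := hya.differentiableAt.hasDerivAt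
  have h1 : HasDerivAt (fun s : ℝ => (s : ℝ) ^ m • u s)
      (((m : ℝ) * y ^ (m - 1)) • u y + (y : ℝ) ^ m • deriv u y) y := by
    have := hp.smul hu'
    rw [add_comm]
    exact this
  exact h1.deriv

lemma tendsto_deriv_of_analyticAt {f : ℝ → ℂ} (hf : AnalyticAt ℝ f 0) :
    Tendsto (fun s => deriv f s) (𝓝[>] (0 : ℝ)) (𝓝 (deriv f 0)) := by
  have h2 : ContinuousAt (fderiv ℝ f) 0 := hf.fderiv.continuousAt
  have h3 : ContinuousAt (fun y => fderiv ℝ f y 1) 0 :=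
    ((ContinuousLinearMap.apply ℝ ℂ (1 : ℝ)).continuous.continuousAt).comp h2
  have h4 : Tendsto (fun y => fderiv ℝ f y 1) (𝓝[>] (0 : ℝ)) (𝓝 (fderiv ℝ f 0 1)) :=
    h3.tendsto.mono_left nhdsWithin_le_nhds
  simpa only [fderiv_apply_one_eq_deriv] using h4

lemma tendsto_ofReal_pow (kk : ℕ) (hkk : 1 ≤ kk) :
    Tendsto (fun s : ℝ => (s : ℂ) ^ kk) (𝓝[>] 0) (𝓝 0) := by
  have h0 : Tendsto (fun s : ℝ => (s : ℂ)) (𝓝[>] (0 : ℝ)) (𝓝 0) := by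
    have := Complex.continuous_ofReal.continuousAt (x := (0 : ℝ))
    simpa using this.tendsto.mono_left nhdsWithin_le_nhds
  simpa [zero_pow (by omega : kk ≠ 0)] using h0.pow kk

lemma eventually_pos_lt {ε : ℝ} (hε : 0 < ε) :
    ∀ᶠ s : ℝ in 𝓝[>] 0, s ∈ Set.Ioo (0 : ℝ) ε :=
  Ioo_mem_nhdsGT_of_mem (Set.left_mem_Ico.mpr hε)

end Helpers

/-- §7.6 of Eyral–Oka. With a second real analytic path `ρ'(s) ∈ S^I(K)`,
`ℓ(s) := ρ(s) − ρ'(s)` of order `o_ℓ`, and `ℓ_∞ := lim_{s→0⁺} ℓ(s)/|s|^{o_ℓ}`, the leading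
forms `ω_k` of Lemma `lemma-fundlil` satisfy `ω_k(ℓ_∞) = 0` for all `1 ≤ k ≤ k_{L'}`. -/
theorem leading_forms_kill_secant_limit (n k₀ nI kL kL' : ℕ)
    (F : Fin k₀ → MvPolynomial (Fin (n + 1)) ℂ)
    (hconst : ∀ k, (F k).totalDegree ≠ 0)
    (hzero : ∀ (k : Fin k₀) (t : ℂ), eval (Fin.cases t fun _ => (0 : ℂ)) (F k) = 0)
    (hadm : NewtonAdmissible F) :
    ∃ ε₀ > (0 : ℝ),
      ∀ (hnI : 0 < nI) (hnIn : nI < n) (hkL' : kL' ≤ kL) (hkL : kL ≤ k₀)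
        (K : Set (Fin k₀)), (∀ k : Fin k₀, (k : ℕ) < kL → k ∈ K) →
      ∀ p₀ : EuclideanSpace ℂ (Fin (n + 1)), ‖p₀‖ < ε₀ →
        p₀ ∈ stratum F {i : Fin n | (i : ℕ) < nI} K →
        p₀ ∈ closure (stratum F Set.univ {k : Fin k₀ | (k : ℕ) < kL}) →
      ∀ (ρ ρ' : ℝ → EuclideanSpace ℂ (Fin (n + 1))) (ε : ℝ), 0 < ε →
        AnalyticAt ℝ ρ 0 → ρ 0 = p₀ →
        (∀ s ∈ Set.Ioo (0 : ℝ) ε,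
          ρ s ∈ stratum F Set.univ {k : Fin k₀ | (k : ℕ) < kL}) →
        AnalyticAt ℝ ρ' 0 → ρ' 0 = p₀ →
        (∀ s ∈ Set.Ioo (0 : ℝ) ε,
          ρ' s ∈ stratum F {i : Fin n | (i : ℕ) < nI} K) →
        (∀ s ∈ Set.Ioo (0 : ℝ) ε, ρ s ≠ ρ' s) →
      ∀ (W : Fin (n + 1) → ℕ) (a : Fin (n + 1) → ℂ),
        (∀ j, a j ≠ 0) →
        (∀ j, Tendsto (fun s : ℝ => ((s : ℂ) ^ W j)⁻¹ * pt (ρ s) j)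
          (𝓝[>] 0) (𝓝 (a j))) →
        (∀ i : Fin n, W i.succ = 0 ↔ (i : ℕ) < nI) →
        (∀ i i' : Fin n, i ≤ i' → W i.succ ≤ W i'.succ) →
        (∀ i : Fin n, (i : ℕ) < nI → a i.succ = pt p₀ i.succ) →
      ∀ d : ℕ,
        (∀ k : Fin k₀, (k : ℕ) < kL' →
          dmin (fun i => W i.succ) (specialize (pt p₀ 0) (F k)) = d) →
        (∀ k : Fin k₀, (k : ℕ) < kL →
          ((k : ℕ) < kL' ↔
            VanishesOn (specialize (pt p₀ 0) (F k)) {i : Fin n | (i : ℕ) < nI})) →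
      ∀ (σ : Equiv.Perm (Fin kL')) (c : Fin kL' → Fin kL' → Polynomial ℂ)
        (ν : Fin kL' → ℕ) (ω : Fin kL' → (Fin (n + 1) → ℂ)),
        Monotone ν →
        (∀ k, (ν k : ℤ) ≤ (d : ℤ) - (W (Fin.succ ⟨nI, hnIn⟩) : ℤ)) →
        (∀ k, ω k ≠ 0) →
        (∀ k : Fin kL',
          Tendsto (fun s : ℝ =>
              ((s : ℂ) ^ ν k)⁻¹ •
                (dvec (F (castIdx (le_trans hkL' hkL) (σ k))) (ρ s) +
                  ∑ l ∈ Finset.univ.filter (fun l : Fin kL' => l < k),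
                    Polynomial.eval (s : ℂ) (c k l) •
                      dvec (F (castIdx (le_trans hkL' hkL) (σ l))) (ρ s)))
            (𝓝[>] 0) (𝓝 (ω k))) →
      ∀ (oℓ : ℕ) (linf : EuclideanSpace ℂ (Fin (n + 1))), linf ≠ 0 →
        Tendsto (fun s : ℝ => (|s| ^ oℓ)⁻¹ • (ρ s - ρ' s))
          (𝓝[>] 0) (𝓝 linf) →
        ∀ k : Fin kL', (∑ j, ω k j * pt linf j) = 0 := by
  obtain ⟨R, hR, τ₀, hτ₀, hadm'⟩ := hadm
  refine ⟨τ₀, hτ₀, ?_⟩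
  intro hnI hnIn hkL' hkL K hK p₀ hp₀ hp₀mem hp₀cl ρ ρ' ε hε hρan hρ0 hρmem hρ'an hρ'0
    hρ'mem hρne W a ha hatend hW0 hWmono ha' d hd hL' σ cc ν ω hνmono hν hωne hω oℓ linf
    hlinf0 hlinf k
  classical
  -- τ is small
  have hτnorm : ‖pt p₀ 0‖ < τ₀ := by
    have h2 : ‖pt p₀ 0‖ ^ 2 ≤ ‖p₀‖ ^ 2 := by
      rw [EuclideanSpace.norm_eq, Real.sq_sqrt (by positivity)]
      exact Finset.single_le_sum (f := fun i => ‖p₀ i‖ ^ 2) (fun i _ => by positivity)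
        (Finset.mem_univ 0)
    nlinarith [norm_nonneg (pt p₀ 0), norm_nonneg p₀]
  set wmin : ℕ := W (Fin.succ ⟨nI, hnIn⟩) with hwmin_def
  have hwmin1 : 1 ≤ wmin := by
    rcases Nat.eq_zero_or_pos wmin with h0 | h1
    · exact absurd ((hW0 ⟨nI, hnIn⟩).mp h0) (by simp)
    · exact h1
  have hνk := hν k
  have hdge : ν k + wmin ≤ d := by omega
  have hd1 : 1 ≤ d := by omega
  set ι : Fin kL' → Fin k₀ := fun l => castIdx (le_trans hkL' hkL) (σ l) with hι_def
  have hιlt : ∀ l, ((ι l : Fin k₀) : ℕ) < kL' := fun l => (σ l).isLt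
  have hιltL : ∀ l, ((ι l : Fin k₀) : ℕ) < kL := fun l => lt_of_lt_of_le (hιlt l) hkL'
  -- weights of support monomials
  have hsupp : ∀ (l : Fin kL') (γ : Fin (n + 1) →₀ ℕ), γ ∈ (F (ι l)).support →
      d ≤ ∑ i : Fin n, W i.succ * γ i.succ := by
    intro l γ hγ
    exact weight_ge_of_mem_support hγ (fun i => W i.succ)
      (fun t ht => (hadm' t ht).1 (ι l)) hτnorm hτ₀ (hd (ι l) (hιlt l)) hd1
  -- coordinates of ρ are analytic
  have hcoordan : ∀ j : Fin (n + 1), AnalyticAt ℝ (fun s => pt (ρ s) j) 0 := by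
    intro j
    have hproj := (((EuclideanSpace.proj j : EuclideanSpace ℂ (Fin (n + 1)) →L[ℂ] ℂ)
      |>.restrictScalars ℝ)).analyticAt (ρ 0)
    have := hproj.comp hρan
    exact this
  -- factor the coordinates
  have hfact : ∀ j : Fin (n + 1), ∃ u : ℝ → ℂ, AnalyticAt ℝ u 0 ∧ u 0 = a j ∧
      ∀ᶠ s in 𝓝 (0 : ℝ), pt (ρ s) j = (s : ℝ) ^ W j • u s :=
    fun j => analytic_factor (hcoordan j) (ha j) (hatend j)
  choose u huan hu0 hueq using hfact
  -- B l j s : the coordinates of the differentials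
  set B : Fin kL' → Fin (n + 1) → ℝ → ℂ :=
    fun l j s => eval (pt (ρ s)) (pderiv j (F (ι l))) with hB_def
  set Avec : ℝ → Fin (n + 1) → ℂ := fun s =>
    dvec (F (ι k)) (ρ s) + ∑ l ∈ Finset.univ.filter (fun l : Fin kL' => l < k),
      Polynomial.eval (s : ℂ) (cc k l) • dvec (F (ι l)) (ρ s) with hAvec_def
  have hAcoord : ∀ s j, Avec s j = B k j s
      + ∑ l ∈ Finset.univ.filter (fun l : Fin kL' => l < k),
        Polynomial.eval (s : ℂ) (cc k l) * B l j s := by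
    intro s j
    simp [hAvec_def, hB_def, dvec, Finset.sum_apply, Pi.add_apply, Pi.smul_apply,
      smul_eq_mul]
  -- limits of the normalized B's in the "degenerate" directions
  have hBlim : ∀ e : ℕ, e + 1 ≤ d → ∀ j : Fin (n + 1),
      (j = 0 ∨ ∃ i : Fin n, (i : ℕ) < nI ∧ j = i.succ) → ∀ l : Fin kL',
      Tendsto (fun s : ℝ => ((s : ℂ) ^ e)⁻¹ * B l j s) (𝓝[>] 0) (𝓝 0) := by
    intro e he j hj l
    have hsum : Tendsto (fun s : ℝ => ∑ β ∈ (pderiv j (F (ι l))).support,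
        ((s : ℂ) ^ e)⁻¹ * (coeff β (pderiv j (F (ι l))) * ∏ j', pt (ρ s) j' ^ β j'))
        (𝓝[>] 0) (𝓝 (∑ _β ∈ (pderiv j (F (ι l))).support, (0 : ℂ))) := by
      refine tendsto_finset_sum _ fun β hβ => ?_
      have hγ := mem_support_of_pderiv hβ
      set γ : Fin (n + 1) →₀ ℕ := β + Finsupp.single j 1 with hγ_def
      have hwz : d ≤ ∑ i : Fin n, W i.succ * γ i.succ := hsupp l γ hγ
      have hzeq : (∑ i : Fin n, W i.succ * β i.succ) = ∑ i : Fin n, W i.succ * γ i.succ := by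
        refine Finset.sum_congr rfl fun i _ => ?_
        rcases hj with hj0 | ⟨i₀, hi₀, hji⟩
        · subst hj0
          rw [hγ_def, Finsupp.add_apply,
            Finsupp.single_eq_of_ne' (Ne.symm (Fin.succ_ne_zero i)), add_zero]
        · subst hji
          by_cases hii : i = i₀
          · subst hii
            have hWi : W i.succ = 0 := (hW0 i).mpr hi₀
            rw [hWi, zero_mul, zero_mul]
          · rw [hγ_def, Finsupp.add_apply,
              Finsupp.single_eq_of_ne' (fun hcon => hii (Fin.succ_inj.mp hcon).symm), add_zero]
      set m : ℕ := ∑ j', W j' * β j' with hm_def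
      have hsplit : m = W 0 * β 0 + ∑ i : Fin n, W i.succ * β i.succ := by
        rw [hm_def, Fin.sum_univ_succ]
      have hm : e + 1 ≤ m := by omega
      have hev : ∀ᶠ s : ℝ in 𝓝[>] 0,
          coeff β (pderiv j (F (ι l))) * ((s : ℂ) ^ (m - e)
              * ∏ j', (((s : ℂ) ^ W j')⁻¹ * pt (ρ s) j') ^ β j')
          = ((s : ℂ) ^ e)⁻¹ * (coeff β (pderiv j (F (ι l))) * ∏ j', pt (ρ s) j' ^ β j') := by
        filter_upwards [self_mem_nhdsWithin] with s hs0
        have hsne : (s : ℂ) ≠ 0 := Complex.ofReal_ne_zero.mpr (ne_of_gt hs0)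
        have hprod : ∏ j', pt (ρ s) j' ^ β j'
            = (∏ j', (((s : ℂ) ^ W j')⁻¹ * pt (ρ s) j') ^ β j') * (s : ℂ) ^ m := by
          rw [hm_def, ← Finset.prod_pow_eq_pow_sum, ← Finset.prod_mul_distrib]
          refine Finset.prod_congr rfl fun j' _ => ?_
          rw [pow_mul, ← mul_pow, mul_comm (((s : ℂ) ^ W j')⁻¹) (pt (ρ s) j'),
            inv_mul_cancel_right₀ (pow_ne_zero _ hsne)]
        have hsm : (s : ℂ) ^ m = (s : ℂ) ^ e * (s : ℂ) ^ (m - e) := by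
          rw [← pow_add]
          congr 1
          omega
        rw [hprod, hsm]
        have hse : ((s : ℂ) ^ e) ≠ 0 := pow_ne_zero _ hsne
        rw [show ((s : ℂ) ^ e)⁻¹ * (coeff β (pderiv j (F (ι l))) *
            ((∏ j', (((s : ℂ) ^ W j')⁻¹ * pt (ρ s) j') ^ β j') * ((s : ℂ) ^ e * (s : ℂ) ^ (m - e))))
            = (((s : ℂ) ^ e)⁻¹ * (s : ℂ) ^ e) * (coeff β (pderiv j (F (ι l))) *
              ((s : ℂ) ^ (m - e) * ∏ j', (((s : ℂ) ^ W j')⁻¹ * pt (ρ s) j') ^ β j')) from by ring,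
          inv_mul_cancel₀ hse, one_mul]
      have hprodlim : Tendsto (fun s : ℝ => ∏ j', (((s : ℂ) ^ W j')⁻¹ * pt (ρ s) j') ^ β j')
          (𝓝[>] 0) (𝓝 (∏ j', a j' ^ β j')) :=
        tendsto_finset_prod _ fun j' _ => (hatend j').pow (β j')
      have hlim2 := ((tendsto_ofReal_pow (m - e) (by omega)).mul hprodlim).const_mul
        (coeff β (pderiv j (F (ι l))))
      rw [zero_mul, mul_zero] at hlim2
      exact Tendsto.congr' hev hlim2
    have hz : (∑ _β ∈ (pderiv j (F (ι l))).support, (0 : ℂ)) = 0 := Finset.sum_const_zero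
    rw [hz] at hsum
    refine hsum.congr fun s => ?_
    rw [← Finset.mul_sum, hB_def]
    congr 1
    exact (MvPolynomial.eval_eq' (pt (ρ s)) (pderiv j (F (ι l)))).symm
  -- limits of the normalized A coordinates in the degenerate directions
  have hAlim : ∀ e : ℕ, e + 1 ≤ d → ∀ j : Fin (n + 1),
      (j = 0 ∨ ∃ i : Fin n, (i : ℕ) < nI ∧ j = i.succ) →
      Tendsto (fun s : ℝ => ((s : ℂ) ^ e)⁻¹ * Avec s j) (𝓝[>] 0) (𝓝 0) := by
    intro e he j hj
    have h1 := hBlim e he j hj k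
    have h2 : ∀ l : Fin kL', Tendsto (fun s : ℝ =>
        Polynomial.eval (s : ℂ) (cc k l) * (((s : ℂ) ^ e)⁻¹ * B l j s)) (𝓝[>] 0)
        (𝓝 (Polynomial.eval ((0 : ℝ) : ℂ) (cc k l) * 0)) := by
      intro l
      have hc : Tendsto (fun s : ℝ => Polynomial.eval (s : ℂ) (cc k l)) (𝓝[>] 0)
          (𝓝 (Polynomial.eval ((0 : ℝ) : ℂ) (cc k l))) := by
        have hcont : Continuous fun s : ℝ => Polynomial.eval (s : ℂ) (cc k l) :=
          ((cc k l).continuous).comp Complex.continuous_ofReal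
        exact hcont.continuousAt.tendsto.mono_left nhdsWithin_le_nhds
      exact hc.mul (hBlim e he j hj l)
    have hsum : Tendsto (fun s : ℝ => ((s : ℂ) ^ e)⁻¹ * B k j s
        + ∑ l ∈ Finset.univ.filter (fun l : Fin kL' => l < k),
          Polynomial.eval (s : ℂ) (cc k l) * (((s : ℂ) ^ e)⁻¹ * B l j s)) (𝓝[>] 0)
        (𝓝 (0 + ∑ l ∈ Finset.univ.filter (fun l : Fin kL' => l < k),
          Polynomial.eval ((0 : ℝ) : ℂ) (cc k l) * 0)) :=
      h1.add (tendsto_finset_sum _ fun l _ => h2 l)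
    have hval : (0 + ∑ l ∈ Finset.univ.filter (fun l : Fin kL' => l < k),
        Polynomial.eval ((0 : ℝ) : ℂ) (cc k l) * 0) = (0 : ℂ) := by simp
    rw [hval] at hsum
    refine hsum.congr fun s => ?_
    rw [hAcoord s j, mul_add, Finset.mul_sum]
    congr 1
    exact Finset.sum_congr rfl fun l _ => by ring
  -- coordinatewise version of hω
  have hωcoordlim : ∀ j : Fin (n + 1),
      Tendsto (fun s : ℝ => ((s : ℂ) ^ ν k)⁻¹ * Avec s j) (𝓝[>] 0) (𝓝 (ω k j)) := by
    intro j
    have h2 := (tendsto_pi_nhds.mp (hω k)) j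
    refine h2.congr fun s => ?_
    rfl
  have hωzero : ∀ j : Fin (n + 1), (j = 0 ∨ ∃ i : Fin n, (i : ℕ) < nI ∧ j = i.succ) →
      ω k j = 0 := fun j hj =>
    tendsto_nhds_unique (hωcoordlim j) (hAlim (ν k) (by omega) j hj)
  -- coordinatewise secant limits
  have hlinfcoord : ∀ j : Fin (n + 1),
      Tendsto (fun s : ℝ => ((s : ℂ) ^ oℓ)⁻¹ * (pt (ρ s) j - pt (ρ' s) j)) (𝓝[>] 0)
        (𝓝 (pt linf j)) := by
    intro j
    have h1 := ((EuclideanSpace.proj j :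
      EuclideanSpace ℂ (Fin (n + 1)) →L[ℂ] ℂ).continuous.tendsto linf).comp hlinf
    have h2 : Tendsto (fun s : ℝ => (((|s| : ℝ) : ℂ) ^ oℓ)⁻¹ * (ρ s j - ρ' s j)) (𝓝[>] 0)
        (𝓝 (linf j)) := by
      simpa [Function.comp_def, PiLp.proj_apply, PiLp.smul_apply, PiLp.sub_apply,
        Complex.real_smul, Complex.ofReal_inv, Complex.ofReal_pow] using h1
    refine Tendsto.congr' ?_ h2
    filter_upwards [self_mem_nhdsWithin] with s hs0
    rw [abs_of_pos hs0]
    rfl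
  -- ρ' vanishes in the directions outside I
  have hρ'zero : ∀ i : Fin n, ¬((i : ℕ) < nI) → ∀ s ∈ Set.Ioo (0 : ℝ) ε,
      pt (ρ' s) i.succ = 0 := by
    intro i hi s hs
    by_contra hne
    exact hi ((hρ'mem s hs).1 i |>.mp hne)
  -- oℓ is at most the weights outside I
  have hoℓle : ∀ i : Fin n, ¬((i : ℕ) < nI) → oℓ ≤ W i.succ := by
    intro i hi
    by_contra hlt
    push_neg at hlt
    have h1 := hlinfcoord i.succ
    have hev : ∀ᶠ s : ℝ in 𝓝[>] 0,
        (s : ℂ) ^ (oℓ - W i.succ) * (((s : ℂ) ^ oℓ)⁻¹ * (pt (ρ s) i.succ - pt (ρ' s) i.succ))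
        = ((s : ℂ) ^ W i.succ)⁻¹ * pt (ρ s) i.succ := by
      filter_upwards [eventually_pos_lt hε, self_mem_nhdsWithin] with s hs hs0
      rw [hρ'zero i hi s hs, sub_zero]
      have hsne : (s : ℂ) ≠ 0 := Complex.ofReal_ne_zero.mpr (ne_of_gt hs0)
      have hoo : (s : ℂ) ^ oℓ = (s : ℂ) ^ W i.succ * (s : ℂ) ^ (oℓ - W i.succ) := by
        rw [← pow_add]
        congr 1
        omega
      have hne2 : ((s : ℂ) ^ (oℓ - W i.succ)) ≠ 0 := pow_ne_zero _ hsne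
      rw [hoo, mul_inv,
        show (s : ℂ) ^ (oℓ - W i.succ) * (((s : ℂ) ^ W i.succ)⁻¹ * ((s : ℂ) ^ (oℓ - W i.succ))⁻¹
            * pt (ρ s) i.succ)
          = ((s : ℂ) ^ (oℓ - W i.succ) * ((s : ℂ) ^ (oℓ - W i.succ))⁻¹)
            * (((s : ℂ) ^ W i.succ)⁻¹ * pt (ρ s) i.succ) from by ring,
        mul_inv_cancel₀ hne2, one_mul]
    have hT : Tendsto (fun s : ℝ => (s : ℂ) ^ (oℓ - W i.succ)
        * (((s : ℂ) ^ oℓ)⁻¹ * (pt (ρ s) i.succ - pt (ρ' s) i.succ))) (𝓝[>] 0)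
        (𝓝 (0 * pt linf i.succ)) :=
      (tendsto_ofReal_pow _ (by omega)).mul h1
    rw [zero_mul] at hT
    exact ha i.succ (tendsto_nhds_unique (hT.congr' hev) (hatend i.succ)).symm
  -- value of the secant limit coordinates outside I
  have hlinfval : ∀ i : Fin n, ¬((i : ℕ) < nI) →
      pt linf i.succ = (if W i.succ = oℓ then a i.succ else 0) := by
    intro i hi
    have hWj := hoℓle i hi
    have hev : ∀ᶠ s : ℝ in 𝓝[>] 0,
        ((s : ℂ) ^ oℓ)⁻¹ * (pt (ρ s) i.succ - pt (ρ' s) i.succ)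
        = (s : ℂ) ^ (W i.succ - oℓ) * (((s : ℂ) ^ W i.succ)⁻¹ * pt (ρ s) i.succ) := by
      filter_upwards [eventually_pos_lt hε, self_mem_nhdsWithin] with s hs hs0
      rw [hρ'zero i hi s hs, sub_zero]
      have hsne : (s : ℂ) ≠ 0 := Complex.ofReal_ne_zero.mpr (ne_of_gt hs0)
      have hWW : (s : ℂ) ^ W i.succ = (s : ℂ) ^ (W i.succ - oℓ) * (s : ℂ) ^ oℓ := by
        rw [← pow_add]
        congr 1
        omega
      have hne2 : ((s : ℂ) ^ (W i.succ - oℓ)) ≠ 0 := pow_ne_zero _ hsne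
      rw [hWW, mul_inv,
        show (s : ℂ) ^ (W i.succ - oℓ) * (((s : ℂ) ^ (W i.succ - oℓ))⁻¹ * ((s : ℂ) ^ oℓ)⁻¹
            * pt (ρ s) i.succ)
          = ((s : ℂ) ^ (W i.succ - oℓ) * ((s : ℂ) ^ (W i.succ - oℓ))⁻¹)
            * (((s : ℂ) ^ oℓ)⁻¹ * pt (ρ s) i.succ) from by ring,
        mul_inv_cancel₀ hne2, one_mul]
    have hmain := (hlinfcoord i.succ).congr' hev
    by_cases hW : W i.succ = oℓ
    · rw [if_pos hW]
      have hT : Tendsto (fun s : ℝ => (s : ℂ) ^ (W i.succ - oℓ)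
          * (((s : ℂ) ^ W i.succ)⁻¹ * pt (ρ s) i.succ)) (𝓝[>] 0) (𝓝 (a i.succ)) := by
        have h0 : W i.succ - oℓ = 0 := by omega
        rw [h0]
        simpa using hatend i.succ
      exact tendsto_nhds_unique hmain hT
    · rw [if_neg hW]
      have hT : Tendsto (fun s : ℝ => (s : ℂ) ^ (W i.succ - oℓ)
          * (((s : ℂ) ^ W i.succ)⁻¹ * pt (ρ s) i.succ)) (𝓝[>] 0) (𝓝 0) := by
        have := (tendsto_ofReal_pow (W i.succ - oℓ) (by omega)).mul (hatend i.succ)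
        simpa using this
      exact tendsto_nhds_unique hmain hT
  have hoℓwmin : oℓ ≤ wmin := hoℓle ⟨nI, hnIn⟩ (by simp)
  -- the target sum, rewritten
  have hgoal : (∑ j, ω k j * pt linf j)
      = ∑ j, (Fin.cases 0 (fun i : Fin n => if (i : ℕ) < nI then 0
          else if W i.succ = oℓ then ω k i.succ * a i.succ else 0) j : ℂ) := by
    refine Finset.sum_congr rfl fun j _ => ?_
    refine Fin.cases ?_ (fun i => ?_) j
    · rw [hωzero 0 (Or.inl rfl), zero_mul, Fin.cases_zero]
    · rw [Fin.cases_succ]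
      by_cases hi : (i : ℕ) < nI
      · rw [if_pos hi, hωzero i.succ (Or.inr ⟨i, hi, rfl⟩), zero_mul]
      · rw [if_neg hi, hlinfval i hi]
        by_cases hW : W i.succ = oℓ
        · rw [if_pos hW, if_pos hW]
        · rw [if_neg hW, if_neg hW, mul_zero]
  rw [hgoal]
  rcases lt_or_eq_of_le hoℓwmin with hlt | heq
  · -- oℓ < wmin : all terms vanish
    refine Finset.sum_eq_zero fun j _ => ?_
    refine Fin.cases rfl (fun i => ?_) j
    rw [Fin.cases_succ]
    by_cases hi : (i : ℕ) < nI
    · rw [if_pos hi]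
    · rw [if_neg hi]
      have hWi : wmin ≤ W i.succ := hWmono ⟨nI, hnIn⟩ i (by
        rw [Fin.le_def]
        simpa using Nat.le_of_not_lt hi)
      rw [if_neg (by omega)]
  · -- oℓ = wmin : use the Euler-type identity along ρ
    have hder : ∀ᶠ y in 𝓝 (0 : ℝ), ∀ j : Fin (n + 1),
        HasDerivAt (fun s => pt (ρ s) j) (deriv (fun s => pt (ρ s) j) y) y := by
      rw [eventually_all]
      intro j
      exact (hcoordan j).eventually_analyticAt.mono fun y hy => hy.differentiableAt.hasDerivAt
    have hφ0 : ∀ l : Fin kL', ∀ s ∈ Set.Ioo (0 : ℝ) ε, eval (pt (ρ s)) (F (ι l)) = 0 := by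
      intro l s hs
      exact ((hρmem s hs).2 (ι l)).mpr (hιltL l)
    have hEuler : ∀ l : Fin kL', ∀ᶠ y : ℝ in 𝓝[>] 0,
        (∑ j, B l j y * deriv (fun s => pt (ρ s) j) y) = 0 := by
      intro l
      filter_upwards [eventually_pos_lt hε,
        hder.eventually_nhds.filter_mono nhdsWithin_le_nhds] with y hy hyder
      have hchain : HasDerivAt (fun r => eval (fun j => pt (ρ r) j) (F (ι l)))
          (∑ j, eval (fun j => pt (ρ y) j) (pderiv j (F (ι l)))
            * deriv (fun s => pt (ρ s) j) y) y :=
        hasDerivAt_eval_comp (F (ι l)) (fun j s => pt (ρ s) j) _ y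
          (fun j => hyder.self_of_nhds j)
      have hzero : (fun r => eval (fun j => pt (ρ r) j) (F (ι l))) =ᶠ[𝓝 y]
          fun _ => (0 : ℂ) := by
        filter_upwards [isOpen_Ioo.mem_nhds hy] with z hz
        exact hφ0 l z hz
      have hchain0 : HasDerivAt (fun r => eval (fun j => pt (ρ r) j) (F (ι l))) 0 y :=
        (hasDerivAt_const y (0 : ℂ)).congr_of_eventuallyEq hzero
      exact hchain.unique hchain0
    have hEulerA : ∀ᶠ y : ℝ in 𝓝[>] 0,
        (∑ j, Avec y j * deriv (fun s => pt (ρ s) j) y) = 0 := by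
      filter_upwards [eventually_all.mpr hEuler] with y hy
      have hexp : (∑ j, Avec y j * deriv (fun s => pt (ρ s) j) y)
          = (∑ j, B k j y * deriv (fun s => pt (ρ s) j) y)
            + ∑ l ∈ Finset.univ.filter (fun l : Fin kL' => l < k),
              Polynomial.eval (y : ℂ) (cc k l)
                * (∑ j, B l j y * deriv (fun s => pt (ρ s) j) y) := by
        calc (∑ j, Avec y j * deriv (fun s => pt (ρ s) j) y)
            = ∑ j, (B k j y * deriv (fun s => pt (ρ s) j) y
              + ∑ l ∈ Finset.univ.filter (fun l : Fin kL' => l < k),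
                Polynomial.eval (y : ℂ) (cc k l)
                  * (B l j y * deriv (fun s => pt (ρ s) j) y)) := by
              refine Finset.sum_congr rfl fun j _ => ?_
              rw [hAcoord y j, add_mul, Finset.sum_mul]
              congr 1
              exact Finset.sum_congr rfl fun l _ => by ring
          _ = _ := by
              rw [Finset.sum_add_distrib]
              congr 1
              rw [Finset.sum_comm]
              exact Finset.sum_congr rfl fun l _ => by rw [Finset.mul_sum]
      rw [hexp, hy k, zero_add]
      exact Finset.sum_eq_zero fun l _ => by rw [hy l, mul_zero]
    have hderivcont : ∀ j : Fin (n + 1),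
        Tendsto (fun s : ℝ => deriv (fun s' => pt (ρ s') j) s) (𝓝[>] 0)
          (𝓝 (deriv (fun s' => pt (ρ s') j) 0)) := fun j =>
      tendsto_deriv_of_analyticAt (hcoordan j)
    have hderiv_tend : ∀ i : Fin n, ¬((i : ℕ) < nI) →
        Tendsto (fun s : ℝ => ((s : ℂ) ^ (wmin - 1))⁻¹
            * deriv (fun s' => pt (ρ s') i.succ) s) (𝓝[>] 0)
          (𝓝 (if W i.succ = wmin then (W i.succ : ℂ) * a i.succ else 0)) := by
      intro i hi
      have hWge : wmin ≤ W i.succ := hWmono ⟨nI, hnIn⟩ i (by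
        rw [Fin.le_def]
        simpa using Nat.le_of_not_lt hi)
      have hWj1 : 1 ≤ W i.succ := le_trans hwmin1 hWge
      have hder_ev := deriv_factor (huan i.succ) (hueq i.succ)
      have hducont : Tendsto (fun s => deriv (u i.succ) s) (𝓝[>] (0 : ℝ))
          (𝓝 (deriv (u i.succ) 0)) :=
        tendsto_deriv_of_analyticAt (huan i.succ)
      have hucont : Tendsto (u i.succ) (𝓝[>] (0 : ℝ)) (𝓝 (a i.succ)) := by
        rw [← hu0 i.succ]
        exact (huan i.succ).continuousAt.tendsto.mono_left nhdsWithin_le_nhds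
      have hid : ∀ᶠ s : ℝ in 𝓝[>] 0,
          ((s : ℂ) ^ (wmin - 1))⁻¹ * deriv (fun s' => pt (ρ s') i.succ) s
          = (W i.succ : ℂ) * ((s : ℂ) ^ (W i.succ - wmin) * u i.succ s)
            + (s : ℂ) ^ (W i.succ - wmin + 1) * deriv (u i.succ) s := by
        filter_upwards [hder_ev.filter_mono nhdsWithin_le_nhds, self_mem_nhdsWithin]
          with s hs hs0
        have hsne : (s : ℂ) ≠ 0 := Complex.ofReal_ne_zero.mpr (ne_of_gt hs0)
        rw [hs, Complex.real_smul, Complex.real_smul, Complex.ofReal_mul,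
          Complex.ofReal_pow, Complex.ofReal_pow, Complex.ofReal_natCast]
        have h1 : (s : ℂ) ^ (W i.succ - 1)
            = (s : ℂ) ^ (W i.succ - wmin) * (s : ℂ) ^ (wmin - 1) := by
          rw [← pow_add]
          congr 1
          omega
        have h2 : (s : ℂ) ^ W i.succ
            = (s : ℂ) ^ (W i.succ - wmin + 1) * (s : ℂ) ^ (wmin - 1) := by
          rw [← pow_add]
          congr 1
          omega
        rw [h1, h2]
        have hsp : ((s : ℂ) ^ (wmin - 1)) ≠ 0 := pow_ne_zero _ hsne
        field_simp
      have hterm1 : Tendsto (fun s : ℝ => (s : ℂ) ^ (W i.succ - wmin) * u i.succ s)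
          (𝓝[>] 0) (𝓝 (if W i.succ = wmin then a i.succ else 0)) := by
        by_cases hWe : W i.succ = wmin
        · rw [if_pos hWe]
          have h0 : W i.succ - wmin = 0 := by omega
          rw [h0]
          simpa using hucont
        · rw [if_neg hWe]
          have := (tendsto_ofReal_pow (W i.succ - wmin) (by omega)).mul hucont
          simpa using this
      have hterm2 : Tendsto (fun s : ℝ =>
          (s : ℂ) ^ (W i.succ - wmin + 1) * deriv (u i.succ) s) (𝓝[>] 0) (𝓝 0) := by
        have := (tendsto_ofReal_pow (W i.succ - wmin + 1) (by omega)).mul hducont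
        simpa using this
      have hval : (W i.succ : ℂ) * (if W i.succ = wmin then a i.succ else 0) + 0
          = (if W i.succ = wmin then (W i.succ : ℂ) * a i.succ else 0) := by
        by_cases hWe : W i.succ = wmin <;> simp [hWe]
      rw [← hval]
      exact Tendsto.congr' (hid.mono fun s hs => hs.symm)
        ((hterm1.const_mul ((W i.succ : ℂ))).add hterm2)
    set e2 : ℕ := ν k + wmin - 1 with he2_def
    have he2d : e2 + 1 ≤ d := by omega
    have hGlim : ∀ j : Fin (n + 1), Tendsto (fun s : ℝ =>
        ((s : ℂ) ^ e2)⁻¹ * (Avec s j * deriv (fun s' => pt (ρ s') j) s)) (𝓝[>] 0)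
        (𝓝 (Fin.cases 0 (fun i : Fin n => if (i : ℕ) < nI then 0
          else ω k i.succ * (if W i.succ = wmin then (W i.succ : ℂ) * a i.succ else 0)) j)) := by
      intro j
      refine Fin.cases ?_ (fun i => ?_) j
      · rw [Fin.cases_zero]
        have h1 := (hAlim e2 he2d 0 (Or.inl rfl)).mul (hderivcont 0)
        rw [zero_mul] at h1
        exact h1.congr fun s => by ring
      · rw [Fin.cases_succ]
        by_cases hi : (i : ℕ) < nI
        · rw [if_pos hi]
          have h1 := (hAlim e2 he2d i.succ (Or.inr ⟨i, hi, rfl⟩)).mul (hderivcont i.succ)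
          rw [zero_mul] at h1
          exact h1.congr fun s => by ring
        · rw [if_neg hi]
          have h1 := (hωcoordlim i.succ).mul (hderiv_tend i hi)
          refine Tendsto.congr' ?_ h1
          filter_upwards [self_mem_nhdsWithin] with s hs0
          have hsne : (s : ℂ) ≠ 0 := Complex.ofReal_ne_zero.mpr (ne_of_gt hs0)
          have hsplit : (s : ℂ) ^ e2 = (s : ℂ) ^ ν k * (s : ℂ) ^ (wmin - 1) := by
            rw [← pow_add]
            congr 1
            omega
          rw [hsplit, mul_inv]
          ring
    have hsum := tendsto_finset_sum Finset.univ (fun j (_ : j ∈ Finset.univ) => hGlim j)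
    have hzero2 : Tendsto (fun s : ℝ =>
        ∑ j, ((s : ℂ) ^ e2)⁻¹ * (Avec s j * deriv (fun s' => pt (ρ s') j) s)) (𝓝[>] 0)
        (𝓝 0) := by
      refine Tendsto.congr' ?_ (tendsto_const_nhds : Tendsto (fun _ : ℝ => (0 : ℂ)) _ _)
      filter_upwards [hEulerA] with y hy
      rw [← Finset.mul_sum, hy, mul_zero]
    have hkey := tendsto_nhds_unique hsum hzero2
    have hrel : ∀ j : Fin (n + 1),
        (Fin.cases 0 (fun i : Fin n => if (i : ℕ) < nI then 0
          else ω k i.succ * (if W i.succ = wmin then (W i.succ : ℂ) * a i.succ else 0)) j : ℂ)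
        = (wmin : ℂ) * (Fin.cases 0 (fun i : Fin n => if (i : ℕ) < nI then 0
          else if W i.succ = oℓ then ω k i.succ * a i.succ else 0) j : ℂ) := by
      intro j
      refine Fin.cases ?_ (fun i => ?_) j
      · simp
      · rw [Fin.cases_succ, Fin.cases_succ]
        by_cases hi : (i : ℕ) < nI
        · simp [hi]
        · rw [if_neg hi, if_neg hi]
          by_cases hWe : W i.succ = wmin
          · rw [if_pos hWe, if_pos (by omega : W i.succ = oℓ), hWe]
            ring
          · rw [if_neg hWe, if_neg (by omega : ¬W i.succ = oℓ), mul_zero, mul_zero]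
    have hfin : (wmin : ℂ) * (∑ j, (Fin.cases 0 (fun i : Fin n => if (i : ℕ) < nI then 0
        else if W i.succ = oℓ then ω k i.succ * a i.succ else 0) j : ℂ)) = 0 := by
      rw [Finset.mul_sum]
      calc (∑ j, (wmin : ℂ) * (Fin.cases 0 (fun i : Fin n => if (i : ℕ) < nI then 0
            else if W i.succ = oℓ then ω k i.succ * a i.succ else 0) j : ℂ))
          = ∑ j, (Fin.cases 0 (fun i : Fin n => if (i : ℕ) < nI then 0
            else ω k i.succ * (if W i.succ = wmin then (W i.succ : ℂ) * a i.succ else 0))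
              j : ℂ) := Finset.sum_congr rfl fun j _ => (hrel j).symm
        _ = 0 := hkey
    have hwne : ((wmin : ℕ) : ℂ) ≠ 0 := Nat.cast_ne_zero.mpr (by omega)
    exact (mul_eq_zero.mp hfin).resolve_left hwne

end NewtonPaper
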